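/- Let ς ∈ ℝ, h ∈ (0,1], and let u, v : ℝ^D → ℂ be bounded measurable functions satisfying sup |u| ≤ h^{−ς} K̄ and ∫ |u|² dμ ≤ K₂ for constants K̄, K₂ > 0, with ‖v‖_∞ > 0. Then for every δ > 0, ℙ[ | (1/N) Σ_{j=1}^N u(X_j) · conj(v(X_j)) − ∫ u · conj(v) dμ | > δ ] ≤ 4 · exp( − N h^{ς} δ² / ( 4 ‖v‖_∞ ( h^{ς} K₂ ‖v‖_∞ + K̄ δ / 3 ) ) ). -/

import Mathlib

open MeasureTheory

section BernsteinAux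

open Real ProbabilityTheory
open scoped Nat

lemma myExp_tail (y : ℝ) :
    Real.exp y - y - 1 = ∑' n : ℕ, y ^ (n + 2) / (n + 2)! := by
  have hs : Summable (fun n : ℕ => y ^ n / n !) := Real.summable_pow_div_factorial y
  have he : Real.exp y = ∑' n : ℕ, y ^ n / n ! := by
    rw [Real.exp_eq_exp_ℝ, NormedSpace.exp_eq_tsum_div]
  have h1 : Summable (fun n : ℕ => y ^ (n + 1) / (n + 1)!) :=
    (summable_nat_add_iff 1).mpr hs
  rw [he, Summable.tsum_eq_zero_add hs, Summable.tsum_eq_zero_add h1]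
  simp [Nat.factorial]
  ring

lemma myExp_mono {y t : ℝ} (h0 : 0 ≤ y) (hyt : y ≤ t) :
    t ^ 2 * (Real.exp y - y - 1) ≤ y ^ 2 * (Real.exp t - t - 1) := by
  rw [myExp_tail, myExp_tail, ← tsum_mul_left, ← tsum_mul_left]
  have hsy : Summable (fun n : ℕ => t ^ 2 * (y ^ (n + 2) / (n + 2)!)) :=
    ((summable_nat_add_iff 2).mpr (Real.summable_pow_div_factorial y)).mul_left _
  have hst : Summable (fun n : ℕ => y ^ 2 * (t ^ (n + 2) / (n + 2)!)) :=
    ((summable_nat_add_iff 2).mpr (Real.summable_pow_div_factorial t)).mul_left _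
  refine Summable.tsum_le_tsum (fun n => ?_) hsy hst
  have hyn : y ^ n ≤ t ^ n := pow_le_pow_left₀ h0 hyt n
  have hfac : (0:ℝ) < (n + 2)! := by positivity
  rw [mul_div_assoc', mul_div_assoc', div_le_div_iff₀ hfac hfac]
  have : t ^ 2 * y ^ (n + 2) ≤ y ^ 2 * t ^ (n + 2) := by
    calc t ^ 2 * y ^ (n + 2) = (t ^ 2 * y ^ 2) * y ^ n := by ring
    _ ≤ (t ^ 2 * y ^ 2) * t ^ n := by
        exact mul_le_mul_of_nonneg_left hyn (by positivity)
    _ = y ^ 2 * t ^ (n + 2) := by ring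
  nlinarith [this, hfac]

lemma myFact_ge (n : ℕ) : (2 * 3 ^ n : ℝ) ≤ (n + 2)! := by
  induction n with
  | zero => norm_num [Nat.factorial]
  | succ k ih =>
      have : ((k + 3)! : ℝ) = (k + 3) * (k + 2)! := by
        rw [show k + 3 = (k + 2) + 1 from rfl, Nat.factorial_succ]
        push_cast; ring
      have h3 : (3:ℝ) ≤ (k + 3 : ℕ) := by push_cast; linarith
      calc (2 * 3 ^ (k + 1) : ℝ) = 3 * (2 * 3 ^ k) := by ring
      _ ≤ 3 * (k + 2)! := by linarith [ih]
      _ ≤ (k + 3 : ℕ) * (k + 2)! := by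
          exact mul_le_mul_of_nonneg_right h3 (by positivity)
      _ = ((k + 1) + 2)! := by rw [show (k+1) + 2 = k + 3 from rfl, this]; push_cast; ring

lemma myExp_quad {t : ℝ} (h0 : 0 ≤ t) (h3 : t < 3) :
    Real.exp t - t - 1 ≤ t ^ 2 / (2 * (1 - t / 3)) := by
  rw [myExp_tail]
  have hgeo : Summable (fun n : ℕ => t ^ 2 / 2 * (t / 3) ^ n) :=
    (summable_geometric_of_lt_one (by positivity) (by linarith)).mul_left _
  have hsum : Summable (fun n : ℕ => t ^ (n + 2) / (n + 2)!) :=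
    (summable_nat_add_iff 2).mpr (Real.summable_pow_div_factorial t)
  have hterm : ∀ n : ℕ, t ^ (n + 2) / (n + 2)! ≤ t ^ 2 / 2 * (t / 3) ^ n := by
    intro n
    have hf := myFact_ge n
    have hp : (0:ℝ) < 2 * 3 ^ n := by positivity
    have : t ^ (n + 2) / (n + 2)! ≤ t ^ (n + 2) / (2 * 3 ^ n) :=
      div_le_div_of_nonneg_left (by positivity) hp hf
    refine this.trans (le_of_eq ?_)
    rw [div_pow, pow_add]
    field_simp
  calc (∑' n : ℕ, t ^ (n + 2) / (n + 2)!) ≤ ∑' n : ℕ, t ^ 2 / 2 * (t / 3) ^ n :=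
        Summable.tsum_le_tsum hterm hsum hgeo
  _ = t ^ 2 / 2 * (1 - t / 3)⁻¹ := by
        rw [tsum_mul_left, tsum_geometric_of_lt_one (by positivity) (by linarith)]
  _ = t ^ 2 / (2 * (1 - t / 3)) := by
        have hpos : (0:ℝ) < 1 - t / 3 := by linarith
        field_simp [hpos.ne']

lemma myQuad_le_exp {t : ℝ} (h : 0 ≤ t) : 1 + t + t ^ 2 / 2 ≤ Real.exp t := by
  have := Real.sum_le_exp_of_nonneg h 3
  simp [Finset.sum_range_succ, Nat.factorial] at this
  linarith [this]

lemma myExp_le_quad {s : ℝ} (hs : s ≤ 0) : Real.exp s ≤ 1 + s + s ^ 2 / 2 := by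
  set f : ℝ → ℝ := fun x => 1 + x + x ^ 2 / 2 - Real.exp x with hf
  have hderiv : ∀ x : ℝ, HasDerivAt f (1 + x - Real.exp x) x := by
    intro x
    have h1 : HasDerivAt (fun x : ℝ => 1 + x + x ^ 2 / 2) (1 + x) x := by
      have := ((hasDerivAt_id x).const_add (1:ℝ)).add ((hasDerivAt_pow 2 x).div_const 2)
      exact this.congr_deriv (by push_cast; ring)
    exact h1.sub (Real.hasDerivAt_exp x)
  have hmono : AntitoneOn f (Set.Iic 0) := by
    have hcont : Continuous f := by
      simp only [hf]; fun_prop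
    have hdiff : DifferentiableOn ℝ f (interior (Set.Iic 0)) :=
      fun x _ => ((hderiv x).differentiableAt).differentiableWithinAt
    refine antitoneOn_of_deriv_nonpos (convex_Iic 0) hcont.continuousOn hdiff (fun x _ => ?_)
    rw [(hderiv x).deriv]
    linarith [Real.add_one_le_exp x]
  have := hmono (Set.mem_Iic.mpr hs) (Set.mem_Iic.mpr le_rfl) hs
  simp [hf] at this ⊢
  linarith

lemma myBennett_pointwise {x b l : ℝ} (hb : 0 < b) (hl : 0 < l) (hx : x ≤ b) :
    Real.exp (l * x) ≤ 1 + l * x + x ^ 2 * ((Real.exp (l * b) - l * b - 1) / b ^ 2) := by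
  set ph := Real.exp (l * b) - l * b - 1 with hphdef
  have hph2 : (l * b) ^ 2 / 2 ≤ ph := by
    have := myQuad_le_exp (mul_pos hl hb).le
    simp [hphdef]; linarith
  rcases le_or_gt x 0 with hx0 | hx0
  · have h1 : Real.exp (l * x) ≤ 1 + l * x + (l * x) ^ 2 / 2 :=
      myExp_le_quad (mul_nonpos_of_nonneg_of_nonpos hl.le hx0)
    have h2 : l ^ 2 / 2 ≤ ph / b ^ 2 := by
      rw [le_div_iff₀ (by positivity)]
      nlinarith [hph2]
    have h3 : (l * x) ^ 2 / 2 ≤ x ^ 2 * (ph / b ^ 2) := by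
      have := mul_le_mul_of_nonneg_left h2 (sq_nonneg x)
      calc (l * x) ^ 2 / 2 = x ^ 2 * (l ^ 2 / 2) := by ring
      _ ≤ x ^ 2 * (ph / b ^ 2) := this
    linarith
  · have key := myExp_mono (mul_nonneg hl.le hx0.le)
      (mul_le_mul_of_nonneg_left hx hl.le)
    have hlb : (0:ℝ) < (l * b) ^ 2 := by positivity
    have h2 : x ^ 2 * (ph / b ^ 2) = (l * x) ^ 2 * ph / (l * b) ^ 2 := by
      field_simp
    have h3 : Real.exp (l * x) - l * x - 1 ≤ x ^ 2 * (ph / b ^ 2) := by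
      rw [h2, le_div_iff₀ hlb]
      nlinarith [key]
    linarith

lemma myBernstein {Ω : Type*} [MeasurableSpace Ω] (P : Measure Ω) [IsProbabilityMeasure P]
    {E : Type*} [MeasurableSpace E] (μ : Measure E) [IsProbabilityMeasure μ]
    (N : ℕ) (hN : 0 < N) (X : Fin N → Ω → E) (hXm : ∀ j, Measurable (X j))
    (hind : iIndepFun X P)
    (hlaw : ∀ j, Measure.map (X j) P = μ)
    (f : E → ℝ) (hf : Measurable f) (b σ2 : ℝ) (hb : 0 < b) (hσ : 0 < σ2)
    (hfb : ∀ y, |f y| ≤ b) (hfσ : ∫ y, (f y) ^ 2 ∂μ ≤ σ2)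
    (ε : ℝ) (hε : 0 < ε) :
    P {ω | ε ≤ ∑ j, (f (X j ω) - ∫ y, f y ∂μ)} ≤
      ENNReal.ofReal (Real.exp (-ε ^ 2 / (2 * (N * σ2 + b * ε / 3)))) := by
  set m := ∫ y, f y ∂μ with hm_def
  -- basic facts
  have hfint : Integrable f μ :=
    Integrable.mono' (integrable_const b) hf.aestronglyMeasurable
      (Filter.Eventually.of_forall fun y => by simpa using hfb y)
  have hm_abs : |m| ≤ b := by
    have h1 : |m| ≤ ∫ y, |f y| ∂μ := by
      simpa using norm_integral_le_integral_norm (μ := μ) f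
    have h2 : ∫ y, |f y| ∂μ ≤ ∫ _, b ∂μ :=
      integral_mono hfint.abs (integrable_const b) (fun y => hfb y)
    simpa using h1.trans h2
  have hNσ : (0:ℝ) < N * σ2 := by positivity
  set A : ℝ := N * σ2 + b * ε / 3 with hA_def
  have hA : 0 < A := by positivity
  set l : ℝ := ε / A with hl_def
  have hl : 0 < l := div_pos hε hA
  have hlb3 : l * b < 3 := by
    rw [hl_def, div_mul_eq_mul_div, div_lt_iff₀ hA]
    rw [hA_def]; nlinarith
  have hlb0 : 0 < l * b := mul_pos hl hb
  set ph : ℝ := Real.exp (l * b) - l * b - 1 with hph_def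
  have hph0 : 0 ≤ ph := by
    have := Real.add_one_le_exp (l * b); rw [hph_def]; linarith
  -- the centered variables
  set Z : Fin N → Ω → ℝ := fun j ω => f (X j ω) - m with hZ_def
  have hZm : ∀ j, Measurable (Z j) := fun j => (hf.comp (hXm j)).sub measurable_const
  have hZbd : ∀ j ω, l * Z j ω ≤ l * (2 * b) := by
    intro j ω
    have h1 := hfb (X j ω)
    have := abs_le.mp h1
    have := abs_le.mp hm_abs
    have : Z j ω ≤ 2 * b := by rw [hZ_def]; simp only; linarith
    exact mul_le_mul_of_nonneg_left this hl.le
  have hZint : ∀ j, Integrable (fun ω => Real.exp (l * Z j ω)) P := by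
    intro j
    refine Integrable.mono' (integrable_const (Real.exp (l * (2 * b))))
      (((hZm j).const_mul l).exp.aestronglyMeasurable)
      (Filter.Eventually.of_forall fun ω => ?_)
    rw [Real.norm_eq_abs, Real.abs_exp]
    exact Real.exp_le_exp.mpr (hZbd j ω)
  -- per-variable mgf bound
  have hmgf : ∀ j, mgf (Z j) P l ≤ Real.exp (σ2 * (ph / b ^ 2)) := by
    intro j
    have hmap : ∫ ω, Real.exp (l * Z j ω) ∂P = ∫ y, Real.exp (l * (f y - m)) ∂μ := by
      rw [← hlaw j]
      exact (integral_map (hXm j).aemeasurable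
        ((hf.sub measurable_const).const_mul l).exp.aestronglyMeasurable).symm
    have hint_exp : Integrable (fun y => Real.exp (l * f y)) μ := by
      refine Integrable.mono' (integrable_const (Real.exp (l * b)))
        ((hf.const_mul l).exp.aestronglyMeasurable)
        (Filter.Eventually.of_forall fun y => ?_)
      rw [Real.norm_eq_abs, Real.abs_exp]
      exact Real.exp_le_exp.mpr (mul_le_mul_of_nonneg_left ((abs_le.mp (hfb y)).2) hl.le)
    have hf2int : Integrable (fun y => (f y) ^ 2) μ := by
      refine Integrable.mono' (integrable_const (b ^ 2)) ((hf.pow_const 2).aestronglyMeasurable)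
        (Filter.Eventually.of_forall fun y => ?_)
      rw [Real.norm_eq_abs, abs_pow]
      exact pow_le_pow_left₀ (abs_nonneg _) (hfb y) 2
    have hrhsint : Integrable (fun y => 1 + l * f y + (f y) ^ 2 * (ph / b ^ 2)) μ :=
      ((integrable_const 1).add (hfint.const_mul l)).add (hf2int.mul_const _)
    have hmono : ∫ y, Real.exp (l * f y) ∂μ ≤
        ∫ y, (1 + l * f y + (f y) ^ 2 * (ph / b ^ 2)) ∂μ :=
      integral_mono hint_exp hrhsint
        (fun y => myBennett_pointwise hb hl ((abs_le.mp (hfb y)).2))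
    have hrhs_eq : ∫ y, (1 + l * f y + (f y) ^ 2 * (ph / b ^ 2)) ∂μ
        = 1 + l * m + (∫ y, (f y) ^ 2 ∂μ) * (ph / b ^ 2) := by
      have e1 : Integrable (fun y => 1 + l * f y) μ := by
        exact (integrable_const 1).add (hfint.const_mul l)
      have e2 : Integrable (fun y => (f y) ^ 2 * (ph / b ^ 2)) μ := by
        exact hf2int.mul_const _
      rw [integral_add e1 e2, integral_add (integrable_const 1) (hfint.const_mul l),
        integral_const, integral_const_mul, integral_mul_const]
      simp [hm_def]
    have hstep : ∫ y, Real.exp (l * f y) ∂μ ≤ Real.exp (l * m + σ2 * (ph / b ^ 2)) := by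
      have h1 : (∫ y, (f y) ^ 2 ∂μ) * (ph / b ^ 2) ≤ σ2 * (ph / b ^ 2) :=
        mul_le_mul_of_nonneg_right hfσ (by positivity)
      have h2 := Real.add_one_le_exp (l * m + σ2 * (ph / b ^ 2))
      calc ∫ y, Real.exp (l * f y) ∂μ
          ≤ 1 + l * m + (∫ y, (f y) ^ 2 ∂μ) * (ph / b ^ 2) := by rw [← hrhs_eq]; exact hmono
        _ ≤ 1 + (l * m + σ2 * (ph / b ^ 2)) := by linarith
        _ ≤ Real.exp (l * m + σ2 * (ph / b ^ 2)) := by linarith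
    have hsplit : ∫ y, Real.exp (l * (f y - m)) ∂μ
        = (∫ y, Real.exp (l * f y) ∂μ) / Real.exp (l * m) := by
      simp_rw [mul_sub, Real.exp_sub]
      exact integral_div _ _
    rw [mgf, hmap, hsplit]
    rw [div_le_iff₀ (Real.exp_pos _)]
    calc ∫ y, Real.exp (l * f y) ∂μ ≤ Real.exp (l * m + σ2 * (ph / b ^ 2)) := hstep
      _ = Real.exp (σ2 * (ph / b ^ 2)) * Real.exp (l * m) := by
          rw [← Real.exp_add]; ring_nf
  -- independence of the centered variables
  have hZind : iIndepFun Z P :=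
    hind.comp (fun _ y => f y - m) (fun _ => hf.sub measurable_const)
  -- Chernoff
  have hintsum : Integrable (fun ω => Real.exp (l * (∑ j, Z j) ω)) P :=
    hZind.integrable_exp_mul_sum hZm (fun j _ => hZint j)
  have hcher := measure_ge_le_exp_mul_mgf (μ := P) (X := ∑ j, Z j) ε hl.le hintsum
  have hprod : mgf (∑ j, Z j) P l ≤ Real.exp (N * (σ2 * (ph / b ^ 2))) := by
    rw [hZind.mgf_sum hZm]
    calc ∏ j : Fin N, mgf (Z j) P l ≤ ∏ _j : Fin N, Real.exp (σ2 * (ph / b ^ 2)) :=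
          Finset.prod_le_prod (fun j _ => mgf_nonneg) (fun j _ => hmgf j)
      _ = Real.exp (σ2 * (ph / b ^ 2)) ^ N := by simp
      _ = Real.exp (N * (σ2 * (ph / b ^ 2))) := by
          rw [← Real.exp_nat_mul]
  -- arithmetic on the exponent
  have h1mlb : 1 - l * b / 3 = (N * σ2) / A := by
    rw [hl_def]
    field_simp
    ring
  have hph_quad : ph / b ^ 2 ≤ l ^ 2 / (2 * (1 - l * b / 3)) := by
    have h1 := myExp_quad hlb0.le hlb3
    rw [hph_def]
    rw [div_le_iff₀ (by positivity)]
    have h2 : (0:ℝ) < 1 - l * b / 3 := by rw [h1mlb]; positivity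
    calc Real.exp (l * b) - l * b - 1 ≤ (l * b) ^ 2 / (2 * (1 - l * b / 3)) := h1
      _ = l ^ 2 / (2 * (1 - l * b / 3)) * b ^ 2 := by
          field_simp
  have hexp_arith : -(l * ε) + N * (σ2 * (l ^ 2 / (2 * (1 - l * b / 3))))
      = -ε ^ 2 / (2 * A) := by
    rw [h1mlb, hl_def]
    field_simp
    ring
  have hfinal : Real.exp (-(l * ε)) * mgf (∑ j, Z j) P l
      ≤ Real.exp (-ε ^ 2 / (2 * A)) := by
    have h1 : Real.exp (-(l * ε)) * mgf (∑ j, Z j) P l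
        ≤ Real.exp (-(l * ε)) * Real.exp (N * (σ2 * (ph / b ^ 2))) :=
      mul_le_mul_of_nonneg_left hprod (Real.exp_pos _).le
    rw [← Real.exp_add] at h1
    refine h1.trans (Real.exp_le_exp.mpr ?_)
    rw [← hexp_arith]
    have h2 : (0:ℝ) < 1 - l * b / 3 := by rw [h1mlb]; positivity
    have h3 : σ2 * (ph / b ^ 2) ≤ σ2 * (l ^ 2 / (2 * (1 - l * b / 3))) :=
      mul_le_mul_of_nonneg_left hph_quad hσ.le
    have h4 : (N:ℝ) * (σ2 * (ph / b ^ 2)) ≤ N * (σ2 * (l ^ 2 / (2 * (1 - l * b / 3)))) :=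
      mul_le_mul_of_nonneg_left h3 (Nat.cast_nonneg N)
    linarith
  -- conclude
  have hset : {ω | ε ≤ ∑ j, (f (X j ω) - m)} = {ω | ε ≤ (∑ j, Z j) ω} := by
    ext ω; simp [hZ_def]
  rw [hset]
  have hne : P {ω | ε ≤ (∑ j, Z j) ω} ≠ ⊤ := measure_ne_top _ _
  calc P {ω | ε ≤ (∑ j, Z j) ω}
      = ENNReal.ofReal (P {ω | ε ≤ (∑ j, Z j) ω}).toReal := (ENNReal.ofReal_toReal hne).symm
    _ ≤ ENNReal.ofReal (Real.exp (-ε ^ 2 / (2 * A))) := by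
        refine ENNReal.ofReal_le_ofReal ?_
        calc (P {ω | ε ≤ (∑ j, Z j) ω}).toReal
            ≤ Real.exp (-l * ε) * mgf (∑ j, Z j) P l := hcher
          _ = Real.exp (-(l * ε)) * mgf (∑ j, Z j) P l := by rw [neg_mul]
          _ ≤ Real.exp (-ε ^ 2 / (2 * A)) := hfinal

end BernsteinAux

set_option maxHeartbeats 2000000 in
/-- L²-consistency of empirical inner products against a localized family:
if `sup |u| ≤ h^{-ς} K̄` and `∫ |u|² dμ ≤ K₂`, then the empirical inner
product of `u` with a fixed bounded `v` concentrates around `∫ u ⬝ conj v dμ`. -/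
theorem empirical_inner_product_consistency
    {Ω : Type*} [MeasurableSpace Ω] (ℙ : Measure Ω) [IsProbabilityMeasure ℙ]
    {D : ℕ} (μ : Measure (EuclideanSpace ℝ (Fin D))) [IsProbabilityMeasure μ]
    (N : ℕ) (hN : 0 < N)
    (X : Fin N → Ω → EuclideanSpace ℝ (Fin D))
    (hX_meas : ∀ j, Measurable (X j))
    (hX_indep : ProbabilityTheory.iIndepFun X ℙ)
    (hX_law : ∀ j, Measure.map (X j) ℙ = μ)
    (ς : ℝ) (h : ℝ) (hh0 : 0 < h) (hh1 : h ≤ 1)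
    (u v : EuclideanSpace ℝ (Fin D) → ℂ)
    (hu_meas : Measurable u) (hv_meas : Measurable v)
    (Kbar K₂ : ℝ) (hKbar : 0 < Kbar) (hK₂ : 0 < K₂)
    (hu_sup : ∀ y, ‖u y‖ ≤ h ^ (-ς) * Kbar)
    (hu_L2 : ∫ y, ‖u y‖ ^ 2 ∂μ ≤ K₂)
    (hv_bdd : BddAbove (Set.range fun y => ‖v y‖))
    (hv_pos : 0 < ⨆ y, ‖v y‖)
    (δ : ℝ) (hδ : 0 < δ) :
    ℙ {ω | δ < ‖(1 / (N : ℂ)) * ∑ j, u (X j ω) * (starRingEnd ℂ) (v (X j ω))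
          - ∫ y, u y * (starRingEnd ℂ) (v y) ∂μ‖}
      ≤ ENNReal.ofReal (4 * Real.exp
          (-(N * h ^ ς * δ ^ 2) /
            (4 * (⨆ y, ‖v y‖) * (h ^ ς * K₂ * (⨆ y, ‖v y‖) + Kbar * δ / 3)))) := by
  classical
  set V : ℝ := ⨆ y, ‖v y‖ with hV_def
  have hVy : ∀ y, ‖v y‖ ≤ V := fun y => le_ciSup hv_bdd y
  have hςpos : 0 < h ^ (-ς) := Real.rpow_pos_of_pos hh0 _
  have hςpos' : 0 < h ^ ς := Real.rpow_pos_of_pos hh0 _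
  have hpow : h ^ ς * h ^ (-ς) = 1 := by
    rw [← Real.rpow_add hh0]; simp
  set b : ℝ := h ^ (-ς) * Kbar * V with hb_def
  have hb : 0 < b := by positivity
  set σ2 : ℝ := K₂ * V ^ 2 with hσ2_def
  have hσ : 0 < σ2 := by positivity
  set g : EuclideanSpace ℝ (Fin D) → ℂ := fun y => u y * (starRingEnd ℂ) (v y) with hg_def
  have hg_meas : Measurable g := hu_meas.mul ((RCLike.continuous_conj.measurable).comp hv_meas)
  have hg_bd : ∀ y, ‖g y‖ ≤ b := by
    intro y
    rw [hg_def]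
    simp only [norm_mul, RCLike.norm_conj]
    rw [hb_def]
    have h1 := hu_sup y
    have h2 := hVy y
    have h3 : (0:ℝ) ≤ ‖v y‖ := norm_nonneg _
    nlinarith [norm_nonneg (u y)]
  have hg_int : Integrable g μ :=
    Integrable.mono' (integrable_const b) hg_meas.aestronglyMeasurable
      (Filter.Eventually.of_forall hg_bd)
  -- integrability of the auxiliary square bound
  have hu2V : Integrable (fun y => ‖u y‖ ^ 2 * V ^ 2) μ := by
    refine Integrable.mono' (integrable_const ((h ^ (-ς) * Kbar) ^ 2 * V ^ 2))
      (((hu_meas.norm.pow_const 2).mul_const _).aestronglyMeasurable)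
      (Filter.Eventually.of_forall fun y => ?_)
    rw [Real.norm_eq_abs, abs_mul, abs_pow, abs_pow, abs_norm, abs_of_nonneg hv_pos.le]
    have h1 := hu_sup y
    have h0 : (0:ℝ) ≤ ‖u y‖ := norm_nonneg _
    have h4 : ‖u y‖ ^ 2 ≤ (h ^ (-ς) * Kbar) ^ 2 := by nlinarith
    nlinarith [mul_le_mul_of_nonneg_right h4 (sq_nonneg V)]
  -- generic second-moment bound for re/im parts
  have hsq_int : ∀ f : EuclideanSpace ℝ (Fin D) → ℝ, Measurable f → (∀ y, |f y| ≤ ‖g y‖) →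
      (∫ y, f y ^ 2 ∂μ ≤ σ2) := by
    intro f hfm hfle
    have hf2int : Integrable (fun y => f y ^ 2) μ := by
      refine Integrable.mono' (integrable_const (b ^ 2)) ((hfm.pow_const 2).aestronglyMeasurable)
        (Filter.Eventually.of_forall fun y => ?_)
      rw [Real.norm_eq_abs, abs_pow]
      exact pow_le_pow_left₀ (abs_nonneg _) ((hfle y).trans (hg_bd y)) 2
    have hmono : ∫ y, f y ^ 2 ∂μ ≤ ∫ y, ‖u y‖ ^ 2 * V ^ 2 ∂μ := by
      refine integral_mono hf2int hu2V (fun y => ?_)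
      have h1 : |f y| ≤ ‖u y‖ * V := by
        refine (hfle y).trans ?_
        rw [hg_def]
        simp only [norm_mul, RCLike.norm_conj]
        exact mul_le_mul_of_nonneg_left (hVy y) (norm_nonneg _)
      have h2 : f y ^ 2 ≤ (‖u y‖ * V) ^ 2 := by
        rw [← sq_abs]
        exact pow_le_pow_left₀ (abs_nonneg _) h1 2
      calc f y ^ 2 ≤ (‖u y‖ * V) ^ 2 := h2
        _ = ‖u y‖ ^ 2 * V ^ 2 := by ring
    refine hmono.trans ?_
    rw [integral_mul_const, hσ2_def]
    nlinarith [sq_nonneg V, mul_le_mul_of_nonneg_right hu_L2 (sq_nonneg V)]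
  -- the four coordinate functions
  set fre : EuclideanSpace ℝ (Fin D) → ℝ := fun y => (g y).re with hfre_def
  set fim : EuclideanSpace ℝ (Fin D) → ℝ := fun y => (g y).im with hfim_def
  have hfre_meas : Measurable fre := Complex.measurable_re.comp hg_meas
  have hfim_meas : Measurable fim := Complex.measurable_im.comp hg_meas
  have hfre_le : ∀ y, |fre y| ≤ ‖g y‖ := fun y => by
    simpa using Complex.abs_re_le_norm (g y)
  have hfim_le : ∀ y, |fim y| ≤ ‖g y‖ := fun y => by
    simpa using Complex.abs_im_le_norm (g y)
  have hfre_b : ∀ y, |fre y| ≤ b := fun y => (hfre_le y).trans (hg_bd y)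
  have hfim_b : ∀ y, |fim y| ≤ b := fun y => (hfim_le y).trans (hg_bd y)
  -- threshold
  set c : ℝ := (Real.sqrt 2)⁻¹ with hc_def
  have hc0 : 0 < c := by
    rw [hc_def]; positivity
  have h2c : 2 * c ^ 2 = 1 := by
    rw [hc_def, inv_pow, Real.sq_sqrt (by norm_num : (0:ℝ) ≤ 2)]
    norm_num
  have hc1 : c ≤ 1 := by nlinarith
  set ε : ℝ := N * (δ * c) with hε_def
  have hN0 : (0:ℝ) < N := Nat.cast_pos.mpr hN
  have hε : 0 < ε := by positivity
  -- the four tail events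
  set B₁ : Set Ω := {ω | ε ≤ ∑ j, (fre (X j ω) - ∫ y, fre y ∂μ)} with hB₁_def
  set B₂ : Set Ω := {ω | ε ≤ ∑ j, ((-fre) (X j ω) - ∫ y, (-fre) y ∂μ)} with hB₂_def
  set B₃ : Set Ω := {ω | ε ≤ ∑ j, (fim (X j ω) - ∫ y, fim y ∂μ)} with hB₃_def
  set B₄ : Set Ω := {ω | ε ≤ ∑ j, ((-fim) (X j ω) - ∫ y, (-fim) y ∂μ)} with hB₄_def
  -- event inclusion
  have hincl : {ω | δ < ‖(1 / (N : ℂ)) * ∑ j, u (X j ω) * (starRingEnd ℂ) (v (X j ω))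
          - ∫ y, u y * (starRingEnd ℂ) (v y) ∂μ‖} ⊆ B₁ ∪ B₂ ∪ B₃ ∪ B₄ := by
    intro ω hω
    simp only [Set.mem_setOf_eq] at hω
    set S : ℂ := (1 / (N : ℂ)) * ∑ j, u (X j ω) * (starRingEnd ℂ) (v (X j ω))
          - ∫ y, u y * (starRingEnd ℂ) (v y) ∂μ with hS_def
    have hre : S.re = (N:ℝ)⁻¹ * (∑ j, fre (X j ω)) - ∫ y, fre y ∂μ := by
      rw [hS_def, Complex.sub_re]
      congr 1
      · have h1 : (1 / (N : ℂ)) = (((N:ℝ)⁻¹ : ℝ) : ℂ) := by push_cast; ring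
        rw [h1, Complex.re_ofReal_mul, Complex.re_sum]
      · rw [hfre_def]
        exact (integral_re hg_int).symm
    have him : S.im = (N:ℝ)⁻¹ * (∑ j, fim (X j ω)) - ∫ y, fim y ∂μ := by
      rw [hS_def, Complex.sub_im]
      congr 1
      · have h1 : (1 / (N : ℂ)) = (((N:ℝ)⁻¹ : ℝ) : ℂ) := by push_cast; ring
        rw [h1, Complex.im_ofReal_mul, Complex.im_sum]
      · rw [hfim_def]
        exact (integral_im hg_int).symm
    have hnormsq : S.re ^ 2 + S.im ^ 2 = ‖S‖ ^ 2 := by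
      rw [Complex.sq_norm, Complex.normSq_apply]; ring
    have hkey : δ * c ≤ |S.re| ∨ δ * c ≤ |S.im| := by
      by_contra hcon
      push_neg at hcon
      obtain ⟨h1, h2⟩ := hcon
      have h3 : S.re ^ 2 < (δ * c) ^ 2 := by
        rw [← sq_abs]
        exact pow_lt_pow_left₀ h1 (abs_nonneg _) (by norm_num)
      have h4 : S.im ^ 2 < (δ * c) ^ 2 := by
        rw [← sq_abs]
        exact pow_lt_pow_left₀ h2 (abs_nonneg _) (by norm_num)
      have h5 : ‖S‖ ^ 2 < δ ^ 2 := by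
        rw [← hnormsq]
        nlinarith [h2c]
      have h6 : δ ^ 2 < ‖S‖ ^ 2 := by nlinarith [norm_nonneg S]
      linarith
    -- translate thresholds
    have htrans : ∀ (f : EuclideanSpace ℝ (Fin D) → ℝ) (w : ℝ),
        w = (N:ℝ)⁻¹ * (∑ j, f (X j ω)) - ∫ y, f y ∂μ → δ * c ≤ w →
        ε ≤ ∑ j, (f (X j ω) - ∫ y, f y ∂μ) := by
      intro f w hw hle
      have hsum : ∑ j, (f (X j ω) - ∫ y, f y ∂μ)
          = (∑ j, f (X j ω)) - N * ∫ y, f y ∂μ := by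
        rw [Finset.sum_sub_distrib]
        congr 1
        rw [Finset.sum_const, Finset.card_univ, Fintype.card_fin, nsmul_eq_mul]
      rw [hsum]
      have := mul_le_mul_of_nonneg_left hle hN0.le
      rw [hw] at this
      rw [hε_def]
      have hNne : (N:ℝ) ≠ 0 := hN0.ne'
      calc (N:ℝ) * (δ * c) ≤ N * ((N:ℝ)⁻¹ * (∑ j, f (X j ω)) - ∫ y, f y ∂μ) := this
        _ = (∑ j, f (X j ω)) - N * ∫ y, f y ∂μ := by field_simp
    have hneg_re : -S.re = (N:ℝ)⁻¹ * (∑ j, (-fre) (X j ω)) - ∫ y, (-fre) y ∂μ := by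
      rw [hre]
      simp only [Pi.neg_apply]
      rw [Finset.sum_neg_distrib, integral_neg]
      ring
    have hneg_im : -S.im = (N:ℝ)⁻¹ * (∑ j, (-fim) (X j ω)) - ∫ y, (-fim) y ∂μ := by
      rw [him]
      simp only [Pi.neg_apply]
      rw [Finset.sum_neg_distrib, integral_neg]
      ring
    simp only [hB₁_def, hB₂_def, hB₃_def, hB₄_def, Set.mem_union, Set.mem_setOf_eq]
    rcases hkey with hk | hk
    · rcases le_abs.mp hk with hk' | hk'
      · exact Or.inl (Or.inl (Or.inl (htrans fre S.re hre hk')))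
      · exact Or.inl (Or.inl (Or.inr (htrans (-fre) (-S.re) hneg_re hk')))
    · rcases le_abs.mp hk with hk' | hk'
      · exact Or.inl (Or.inr (htrans fim S.im him hk'))
      · exact Or.inr (htrans (-fim) (-S.im) hneg_im hk')
  -- apply Bernstein to each tail
  have hB₁ := myBernstein ℙ μ N hN X hX_meas hX_indep hX_law fre hfre_meas b σ2 hb hσ
    hfre_b (hsq_int fre hfre_meas hfre_le) ε hε
  have hB₂ := myBernstein ℙ μ N hN X hX_meas hX_indep hX_law (-fre) hfre_meas.neg b σ2 hb hσ
    (fun y => by simpa using hfre_b y)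
    (by simpa using hsq_int fre hfre_meas hfre_le) ε hε
  have hB₃ := myBernstein ℙ μ N hN X hX_meas hX_indep hX_law fim hfim_meas b σ2 hb hσ
    hfim_b (hsq_int fim hfim_meas hfim_le) ε hε
  have hB₄ := myBernstein ℙ μ N hN X hX_meas hX_indep hX_law (-fim) hfim_meas.neg b σ2 hb hσ
    (fun y => by simpa using hfim_b y)
    (by simpa using hsq_int fim hfim_meas hfim_le) ε hε
  set bexp : ℝ := Real.exp (-ε ^ 2 / (2 * (N * σ2 + b * ε / 3))) with hbexp_def
  -- sum up
  have hsum4 : ℙ {ω | δ < ‖(1 / (N : ℂ)) * ∑ j, u (X j ω) * (starRingEnd ℂ) (v (X j ω))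
          - ∫ y, u y * (starRingEnd ℂ) (v y) ∂μ‖}
      ≤ ENNReal.ofReal (bexp + bexp + bexp + bexp) := by
    calc ℙ {ω | δ < ‖(1 / (N : ℂ)) * ∑ j, u (X j ω) * (starRingEnd ℂ) (v (X j ω))
          - ∫ y, u y * (starRingEnd ℂ) (v y) ∂μ‖} ≤ ℙ (B₁ ∪ B₂ ∪ B₃ ∪ B₄) :=
          measure_mono hincl
      _ ≤ ℙ (B₁ ∪ B₂ ∪ B₃) + ℙ B₄ := measure_union_le _ _
      _ ≤ (ℙ (B₁ ∪ B₂) + ℙ B₃) + ℙ B₄ := by gcongr; exact measure_union_le _ _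
      _ ≤ ((ℙ B₁ + ℙ B₂) + ℙ B₃) + ℙ B₄ := by gcongr <;> exact measure_union_le _ _
      _ ≤ ((ENNReal.ofReal bexp + ENNReal.ofReal bexp) + ENNReal.ofReal bexp)
            + ENNReal.ofReal bexp := by gcongr <;> assumption
      _ = ENNReal.ofReal (bexp + bexp + bexp + bexp) := by
          rw [← ENNReal.ofReal_add (by positivity) (by positivity),
            ← ENNReal.ofReal_add (by positivity) (by positivity),
            ← ENNReal.ofReal_add (by positivity) (by positivity)]
  refine hsum4.trans (ENNReal.ofReal_le_ofReal ?_)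
  -- final exponent comparison
  have hexp_le : -ε ^ 2 / (2 * (N * σ2 + b * ε / 3))
      ≤ -(N * h ^ ς * δ ^ 2) / (4 * V * (h ^ ς * K₂ * V + Kbar * δ / 3)) := by
    have hD1 : 0 < 2 * ((N:ℝ) * σ2 + b * ε / 3) := by positivity
    have hD2 : 0 < 4 * V * (h ^ ς * K₂ * V + Kbar * δ / 3) := by positivity
    rw [div_le_div_iff₀ hD1 hD2]
    have hbh : h ^ ς * b = Kbar * V := by
      rw [hb_def]
      calc h ^ ς * (h ^ (-ς) * Kbar * V) = (h ^ ς * h ^ (-ς)) * (Kbar * V) := by ring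
        _ = Kbar * V := by rw [hpow]; ring
    rw [hε_def, hσ2_def]
    have e1 : -((N:ℝ) * (δ * c)) ^ 2 * (4 * V * (h ^ ς * K₂ * V + Kbar * δ / 3))
        = -(2 * (N:ℝ)^2 * δ^2 * (h ^ ς * K₂ * V^2))
          - (4/3) * c^2 * ((N:ℝ)^2 * δ^3 * (Kbar * V)) := by
      linear_combination (-(2:ℝ) * (N:ℝ)^2 * δ^2 * (h ^ ς * K₂ * V^2)) * h2c
    have e2 : -((N:ℝ) * h ^ ς * δ ^ 2) * (2 * ((N:ℝ) * (K₂ * V ^ 2) + b * ((N:ℝ) * (δ * c)) / 3))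
        = -(2 * (N:ℝ)^2 * δ^2 * (h ^ ς * K₂ * V^2))
          - (2/3) * c * ((N:ℝ)^2 * δ^3 * (Kbar * V)) := by
      linear_combination (-(2:ℝ)/3 * c * (N:ℝ)^2 * δ^3) * hbh
    have hY : (0:ℝ) ≤ (N:ℝ)^2 * δ^3 * (Kbar * V) := by positivity
    have hcY : (2/3) * c * ((N:ℝ)^2 * δ^3 * (Kbar * V))
        ≤ (2/3) * ((N:ℝ)^2 * δ^3 * (Kbar * V)) := by
      nlinarith [mul_nonneg (sub_nonneg.mpr hc1) hY]
    have h43 : (4/3) * c^2 * ((N:ℝ)^2 * δ^3 * (Kbar * V))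
        = (2/3) * ((N:ℝ)^2 * δ^3 * (Kbar * V)) := by
      linear_combination ((2:ℝ)/3 * ((N:ℝ)^2 * δ^3 * (Kbar * V))) * h2c
    rw [e1, e2, h43]
    linarith [hcY]
  have h4 : bexp + bexp + bexp + bexp = 4 * bexp := by ring
  rw [h4]
  have : bexp ≤ Real.exp (-(N * h ^ ς * δ ^ 2) /
      (4 * V * (h ^ ς * K₂ * V + Kbar * δ / 3))) := by
    rw [hbexp_def]
    exact Real.exp_le_exp.mpr hexp_le
  nlinarith [Real.exp_pos (-(N * h ^ ς * δ ^ 2) /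
      (4 * V * (h ^ ς * K₂ * V + Kbar * δ / 3))), this]
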